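/- If I is a monomial ideal of k[x_1,...,x_n] generated by a regular sequence of monomials (a complete intersection monomial ideal), then every minimal monomial generator of I is also a minimal monomial generator of its integral closure Ī; in particular μ(I) ≤ μ(Ī), where μ denotes the minimal number of generators. -/

import Mathlib

open MvPolynomial

variable {k : Type} [Field k] {n : ℕ}

/-- An ideal of `k[x₁,…,xₙ]` is a *monomial ideal* if it is generated by monomials. -/
def IsMonomialIdeal (I : Ideal (MvPolynomial (Fin n) k)) : Prop :=
  ∃ G : Set (Fin n →₀ ℕ), I = Ideal.span ((fun A => (monomial A (1 : k))) '' G)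

/-- The integral closure of an ideal `I`, as a set: all elements `f` satisfying an
equation `f^r + a₁ f^{r-1} + ⋯ + a_r = 0` with `aᵢ ∈ Iⁱ`. -/
def intCl (I : Ideal (MvPolynomial (Fin n) k)) : Set (MvPolynomial (Fin n) k) :=
  {f | ∃ r : ℕ, 0 < r ∧ ∃ a : ℕ → MvPolynomial (Fin n) k,
    (∀ i, 1 ≤ i → i ≤ r → a i ∈ I ^ i) ∧
    f ^ r + ∑ i ∈ Finset.Icc 1 r, a i * f ^ (r - i) = 0}

/-- The exponent vectors of the minimal monomial generators of a set `T` of polynomials: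
those `A` with `x^A ∈ T` minimal in the componentwise (divisibility) order. -/
def minExps (T : Set (MvPolynomial (Fin n) k)) : Set (Fin n →₀ ℕ) :=
  {A | monomial A (1 : k) ∈ T ∧
    ∀ B : Fin n →₀ ℕ, monomial B (1 : k) ∈ T → B ≤ A → B = A}

/-- `I^j` is contained in the monomial ideal generated by products of `j` of the
generators of `I`. -/
lemma aux_pow_le {c : ℕ} (A : Fin c → (Fin n →₀ ℕ)) (j : ℕ) :
    (Ideal.span (Set.range fun i => monomial (A i) (1 : k))) ^ j ≤
      Ideal.span ((fun s => monomial s (1 : k)) ''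
        {D | ∃ t : Multiset (Fin c), Multiset.card t = j ∧ (t.map A).sum = D}) := by
  induction j with
  | zero =>
    rw [pow_zero]
    have h1 : (1 : MvPolynomial (Fin n) k) ∈ Ideal.span ((fun s => monomial s (1 : k)) ''
        {D | ∃ t : Multiset (Fin c), Multiset.card t = 0 ∧ (t.map A).sum = D}) := by
      have : (1 : MvPolynomial (Fin n) k) = monomial 0 1 := by simp
      rw [this]
      exact Ideal.subset_span ⟨0, ⟨0, by simp⟩, rfl⟩
    exact fun x _ => one_mul x ▸ Ideal.mul_mem_right x _ h1
  | succ j ih =>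
    rw [pow_succ]
    have hIle : (Ideal.span (Set.range fun i => monomial (A i) (1 : k))) ≤
        Ideal.span ((fun s => monomial s (1 : k)) '' Set.range A) := by
      apply Ideal.span_mono
      rintro _ ⟨i, rfl⟩
      exact ⟨A i, ⟨i, rfl⟩, rfl⟩
    calc _ ≤ Ideal.span ((fun s => monomial s (1 : k)) ''
            {D | ∃ t : Multiset (Fin c), Multiset.card t = j ∧ (t.map A).sum = D}) *
          Ideal.span ((fun s => monomial s (1 : k)) '' Set.range A) :=
          Ideal.mul_mono ih hIle
      _ ≤ _ := by
          rw [Ideal.span_mul_span']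
          apply Ideal.span_mono
          rintro _ ⟨_, ⟨_, ⟨t, hc, rfl⟩, rfl⟩, _, ⟨_, ⟨i, rfl⟩, rfl⟩, rfl⟩
          refine ⟨(t.map A).sum + A i, ⟨i ::ₘ t, by simp [hc], by simp [add_comm]⟩, ?_⟩
          simp [monomial_mul]

lemma aux_msum_apply {n c : ℕ} (A : Fin c → (Fin n →₀ ℕ)) (t : Multiset (Fin c)) (x : Fin n) :
    ((t.map A).sum) x = ((t.map fun l => A l x)).sum := by
  induction t using Multiset.induction with
  | empty => simp
  | cons a s ih => simp [ih]

/-- The key step: if `x^B` is integral over a complete intersection monomial ideal and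
`B ≤ A i₀` for a generator exponent `A i₀`, then `B = A i₀`. -/
lemma aux_eq_of_mem_intCl {c : ℕ} (A : Fin c → (Fin n →₀ ℕ))
    (hA0 : ∀ i, A i ≠ 0)
    (hcop : Pairwise fun i j => Disjoint (A i).support (A j).support)
    (I : Ideal (MvPolynomial (Fin n) k))
    (hI : I = Ideal.span (Set.range fun i => monomial (A i) (1 : k)))
    (i₀ : Fin c) (B : Fin n →₀ ℕ) (hBcl : monomial B (1:k) ∈ intCl I)
    (hBle : B ≤ A i₀) : B = A i₀ := by
  obtain ⟨r, hr, a, ha, heq⟩ := hBcl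
  set G' : Set (Fin n →₀ ℕ) :=
    {D | ∃ t : Multiset (Fin c), 1 ≤ Multiset.card t ∧ Multiset.card t ≤ r ∧
      D = (t.map A).sum + (r - Multiset.card t) • B} with hG'
  set J : Ideal (MvPolynomial (Fin n) k) :=
    Ideal.span ((fun s => monomial s (1 : k)) '' G') with hJ
  -- each summand of the integral equation lies in J
  have hsum : ∑ i ∈ Finset.Icc 1 r, a i * (monomial B (1:k)) ^ (r - i) ∈ J := by
    apply Ideal.sum_mem
    intro j hj
    obtain ⟨hj1, hjr⟩ := Finset.mem_Icc.mp hj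
    have h1 : a j ∈ Ideal.span ((fun s => monomial s (1 : k)) ''
        {D | ∃ t : Multiset (Fin c), Multiset.card t = j ∧ (t.map A).sum = D}) :=
      aux_pow_le A j (by rw [← hI]; exact ha j hj1 hjr)
    have h2 : (monomial B (1:k)) ^ (r - j) = monomial ((r - j) • B) 1 := by
      rw [monomial_pow, one_pow]
    have h3 : (monomial ((r-j) • B) (1:k)) ∈
        Ideal.span {monomial ((r-j) • B) (1:k)} := Ideal.subset_span rfl
    have h4 := Ideal.mul_mem_mul h1 h3
    rw [Ideal.span_mul_span'] at h4
    rw [h2]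
    refine Ideal.span_le.mpr ?_ h4
    rintro _ ⟨_, ⟨_, ⟨t, hc, rfl⟩, rfl⟩, _, rfl, rfl⟩
    apply Ideal.subset_span
    exact ⟨(t.map A).sum + (r - j) • B, ⟨t, by omega, by omega, by rw [hc]⟩,
      by simp [monomial_mul]⟩
  -- hence the power of the monomial is in J
  have hpow : monomial (r • B) (1:k) ∈ J := by
    have h2 : (monomial B (1:k)) ^ r = monomial (r • B) 1 := by
      rw [monomial_pow, one_pow]
    rw [← h2]
    have h3 : (monomial B (1:k)) ^ r =
        -(∑ i ∈ Finset.Icc 1 r, a i * (monomial B (1:k)) ^ (r - i)) := by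
      linear_combination heq
    rw [h3]
    exact J.neg_mem hsum
  -- extract a dividing monomial generator
  rw [hJ, mem_ideal_span_monomial_image] at hpow
  have hsupp : r • B ∈ (monomial (r • B) (1:k)).support := by
    classical
    rw [support_monomial, if_neg (one_ne_zero)]
    exact Finset.mem_singleton_self _
  obtain ⟨D, ⟨t, ht1, htr, rfl⟩, hDle⟩ := hpow _ hsupp
  set j := Multiset.card t with hjdef
  have hkey : ∀ x : Fin n, ((t.map A).sum) x ≤ j * B x := by
    intro x
    have h0 := hDle x
    simp only [Finsupp.add_apply, Finsupp.smul_apply, smul_eq_mul] at h0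
    have h1 : r * B x = (r - j) * B x + j * B x := by
      rw [← Nat.add_mul, Nat.sub_add_cancel htr]
    omega
  have hall : ∀ l ∈ t, l = i₀ := by
    intro l hl
    by_contra hne
    obtain ⟨x₀, hx₀⟩ := Finsupp.support_nonempty_iff.mpr (hA0 l)
    have h5 : A l x₀ ≤ ((t.map A).sum) x₀ := by
      rw [aux_msum_apply]
      exact Multiset.single_le_sum (fun _ _ => Nat.zero_le _) _
        (Multiset.mem_map_of_mem _ hl)
    have h6 : A i₀ x₀ = 0 := by
      have := hcop hne
      by_contra h
      exact (Finset.disjoint_left.mp this hx₀) (Finsupp.mem_support_iff.mpr h)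
    have h7 : B x₀ ≤ A i₀ x₀ := hBle x₀
    have h8 : B x₀ = 0 := by omega
    have h9 := hkey x₀
    rw [h8, Nat.mul_zero] at h9
    have := Finsupp.mem_support_iff.mp hx₀
    omega
  have htrep : t = Multiset.replicate j i₀ := by
    rw [Multiset.eq_replicate]
    exact ⟨rfl, hall⟩
  have hge : A i₀ ≤ B := by
    intro x
    have h10 := hkey x
    rw [htrep] at h10
    simp only [Multiset.map_replicate, Multiset.sum_replicate, Finsupp.smul_apply,
      smul_eq_mul] at h10
    exact Nat.le_of_mul_le_mul_left h10 (by omega)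
  exact le_antisymm hBle hge

/-- If `I` is generated by a regular sequence of monomials (equivalently,
by nonconstant pairwise coprime monomials), then every minimal monomial generator of `I`
is a minimal monomial generator of the integral closure `Ī`; in particular `μ(I) ≤ μ(Ī)`. -/
theorem minExps_subset_of_completeIntersection {c : ℕ} (A : Fin c → (Fin n →₀ ℕ))
    (hA0 : ∀ i, A i ≠ 0)
    (hcop : Pairwise fun i j => Disjoint (A i).support (A j).support)
    (I : Ideal (MvPolynomial (Fin n) k))
    (hI : I = Ideal.span (Set.range fun i => monomial (A i) (1 : k))) :
    minExps (I : Set (MvPolynomial (Fin n) k)) ⊆ minExps (intCl I) ∧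
      (minExps (I : Set (MvPolynomial (Fin n) k))).ncard ≤ (minExps (intCl I)).ncard := by
  have hsub : minExps (I : Set (MvPolynomial (Fin n) k)) ⊆ minExps (intCl I) := by
    rintro E ⟨hEmem, hEmin⟩
    -- E equals some A i₀
    have hIm : I = Ideal.span ((fun s => monomial s (1 : k)) '' Set.range A) := by
      rw [hI]; congr 1; ext f
      constructor
      · rintro ⟨i, rfl⟩; exact ⟨A i, ⟨i, rfl⟩, rfl⟩
      · rintro ⟨_, ⟨i, rfl⟩, rfl⟩; exact ⟨i, rfl⟩
    have hEmem' := hEmem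
    rw [SetLike.mem_coe, hIm, mem_ideal_span_monomial_image] at hEmem'
    have hEsupp : E ∈ (monomial E (1:k)).support := by
      classical
      rw [support_monomial, if_neg (one_ne_zero)]
      exact Finset.mem_singleton_self _
    obtain ⟨_, ⟨i₀, rfl⟩, hle⟩ := hEmem' _ hEsupp
    have hAiI : monomial (A i₀) (1:k) ∈ I := by
      rw [hI]; exact Ideal.subset_span ⟨i₀, rfl⟩
    have hEi : E = A i₀ := (hEmin (A i₀) hAiI hle).symm
    constructor
    · -- monomial E 1 ∈ intCl I
      refine ⟨1, one_pos, fun _ => -(monomial E (1:k)), ?_, ?_⟩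
      · intro i hi1 hi2
        have : i = 1 := le_antisymm hi2 hi1
        subst this
        rw [pow_one]
        exact I.neg_mem hEmem
      · simp
    · intro B hB hBle
      rw [hEi] at hBle ⊢
      exact aux_eq_of_mem_intCl A hA0 hcop I hI i₀ B hB hBle
  -- the larger set is an antichain, hence finite by Dickson's lemma
  have hanti : IsAntichain (· ≤ ·) (minExps (intCl I) : Set (Fin n →₀ ℕ)) := by
    rintro a ⟨hamem, _⟩ b ⟨_, hbmin⟩ hne hle
    exact hne (hbmin a hamem hle)
  have hfin : (minExps (intCl I) : Set (Fin n →₀ ℕ)).Finite :=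
    hanti.finite_of_partiallyWellOrderedOn (Set.isPWO_of_wellQuasiOrderedLE _)
  exact ⟨hsub, Set.ncard_le_ncard hsub hfin⟩
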